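/- Let A be a commutative ring, a ∈ A a regular element (non-zerodivisor), and g ∈ A[X] a polynomial of the form g = b·X - c where b ∈ A is a non-zerodivisor modulo a (i.e., multiplication by b is injective on A/aA). Then the a-torsion of A[X]/(g) equals the image in A[X]/(g) of elements mapping to g-torsion in A[X]/aA[X]; in particular, if b is a non-zerodivisor in A/aA then A[X]/(bX - c) has no a-torsion. -/
import Mathlib


open Polynomial

/-- Let `A` be a commutative ring, `a ∈ A` a regular element, and `g = b·X - c` with `b` a
non-zerodivisor modulo `a`.  Then the `a`-torsion of `A[X]/(g)` is exactly the image of the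
`g`-torsion of `A[X]/aA[X]`: an element `y` is `a`-torsion if and only if `y` is the class of
`u` where `a·u = g·z` for some `z` (so that `z mod a` is `g`-torsion and `u = (g·z)/a`).
In particular, since `b` is a non-zerodivisor in `A/aA`, the ring `A[X]/(b·X - c)` has no
`a`-torsion. -/
theorem torsion_of_polynomial_quotient (A : Type*) [CommRing A] (a b c : A)
    (ha : ∀ x : A, a * x = 0 → x = 0)
    (hb : ∀ x : A, a ∣ b * x → a ∣ x) :
    (∀ y : Polynomial A ⧸ Ideal.span {C b * X - C c},
        a • y = 0 ↔ ∃ z u : Polynomial A, (C b * X - C c) * z = C a * u ∧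
          Ideal.Quotient.mk (Ideal.span {C b * X - C c}) u = y) ∧
    (∀ y : Polynomial A ⧸ Ideal.span {C b * X - C c}, a • y = 0 → y = 0) := by
  set g : Polynomial A := C b * X - C c with hg
  -- key: if g * z = C a * u then g ∣ u
  have key : ∀ z u : Polynomial A, g * z = C a * u → g ∣ u := by
    intro z u hz
    have hcoeff : ∀ n : ℕ, b * z.coeff n = a * u.coeff (n+1) + c * z.coeff (n+1) := by
      intro n
      have h := congrArg (fun p : Polynomial A => p.coeff (n+1)) hz
      simp only [hg, sub_mul, coeff_sub, coeff_C_mul, mul_assoc, coeff_X_mul] at h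
      linear_combination h
    have hdvd : ∀ m n : ℕ, z.natDegree < n + m → a ∣ z.coeff n := by
      intro m
      induction m with
      | zero => intro n hn; rw [z.coeff_eq_zero_of_natDegree_lt (by omega)]; exact dvd_zero a
      | succ m ih =>
        intro n hn
        have h1 : a ∣ z.coeff (n+1) := ih (n+1) (by omega)
        have : a ∣ b * z.coeff n := by
          rw [hcoeff n]
          exact dvd_add (Dvd.intro _ rfl) (Dvd.dvd.mul_left h1 c)
        exact hb _ this
    have hCdvd : C a ∣ z := (C_dvd_iff_dvd_coeff a z).2
      (fun n => hdvd (z.natDegree + 1) n (by omega))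
    obtain ⟨z', rfl⟩ := hCdvd
    have hcancel : C a * u = C a * (g * z') := by
      rw [← hz]; ring
    have : u = g * z' := by
      ext n
      have h := congrArg (fun p : Polynomial A => p.coeff n) hcancel
      simp only [coeff_C_mul] at h
      have := ha (u.coeff n - (g * z').coeff n) (by rw [mul_sub, h, sub_self])
      exact sub_eq_zero.mp this
    exact ⟨z', this⟩
  have hsmul : ∀ u : Polynomial A,
      a • Ideal.Quotient.mk (Ideal.span {g}) u = Ideal.Quotient.mk (Ideal.span {g}) (C a * u) := by
    intro u
    rw [← smul_eq_C_mul]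
    rfl
  have main : ∀ y : Polynomial A ⧸ Ideal.span {g},
      a • y = 0 ↔ ∃ z u : Polynomial A, g * z = C a * u ∧
        Ideal.Quotient.mk (Ideal.span {g}) u = y := by
    intro y
    obtain ⟨u, rfl⟩ := Ideal.Quotient.mk_surjective y
    rw [hsmul]
    constructor
    · intro h
      have := Ideal.Quotient.eq_zero_iff_mem.mp h
      obtain ⟨z, hz⟩ := Ideal.mem_span_singleton'.mp this
      exact ⟨z, u, by rw [← hz]; ring, rfl⟩
    · rintro ⟨z, u', hzu, hu'⟩
      have : Ideal.Quotient.mk (Ideal.span {g}) (C a * u') = 0 := by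
        rw [← hzu]
        exact Ideal.Quotient.eq_zero_iff_mem.mpr
          (Ideal.mem_span_singleton'.mpr ⟨z, by ring⟩)
      calc Ideal.Quotient.mk (Ideal.span {g}) (C a * u)
          = a • Ideal.Quotient.mk (Ideal.span {g}) u := (hsmul u).symm
        _ = a • Ideal.Quotient.mk (Ideal.span {g}) u' := by rw [hu']
        _ = Ideal.Quotient.mk (Ideal.span {g}) (C a * u') := hsmul u'
        _ = 0 := this
  refine ⟨main, fun y hy => ?_⟩
  obtain ⟨z, u, hzu, rfl⟩ := (main y).mp hy
  exact Ideal.Quotient.eq_zero_iff_mem.mpr (Ideal.mem_span_singleton.mpr (key z u hzu))
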